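/- If I is an increasing-invariant Erdős–Ulam ideal, then Z ⊆ I, where Z is the ideal of asymptotic density zero sets. -/

import Mathlib

open Filter Finset Topology

/-- `cnt A n = |A ∩ [0,n)|`. -/
noncomputable def cnt (A : Set ℕ) (n : ℕ) : ℕ := (A ∩ Set.Iio n).ncard

/-- The simple density ideal associated to a weight `g`. -/
def Zg (g : ℕ → ℝ) : Set (Set ℕ) :=
  {A | Tendsto (fun n => (cnt A n : ℝ) / g n) atTop (𝓝 0)}

/-- The ideal of asymptotic density zero sets. -/
def Zid : Set (Set ℕ) :=
  {A | Tendsto (fun n => (cnt A n : ℝ) / n) atTop (𝓝 0)}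

/-- An ideal is increasing-invariant. -/
def IncInv (I : Set (Set ℕ)) : Prop :=
  ∀ B ∈ I, ∀ C : Set ℕ, (∀ n, cnt C n ≤ cnt B n) → C ∈ I

/-- Tallness. -/
def Tall (I : Set (Set ℕ)) : Prop :=
  ∀ A : Set ℕ, A.Infinite → ∃ B ⊆ A, B.Infinite ∧ B ∈ I

/-- The conditions on `f` for the Erdős–Ulam ideal `EU f` to be defined. -/
def EUcond (f : ℕ → ℝ) : Prop :=
  (∀ n, 0 ≤ f n) ∧ Tendsto (fun n => ∑ i ∈ Finset.range n, f i) atTop atTop ∧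
    Tendsto (fun n => f n / ∑ i ∈ Finset.range (n + 1), f i) atTop (𝓝 0)

/-- The Erdős–Ulam ideal associated to `f`. -/
def EU (f : ℕ → ℝ) : Set (Set ℕ) :=
  {A | Tendsto
    (fun n => (∑ i ∈ Finset.range n, Set.indicator A f i) / ∑ i ∈ Finset.range n, f i)
    atTop (𝓝 0)}

/-- Being an Erdős–Ulam ideal. -/
def IsEUIdeal (I : Set (Set ℕ)) : Prop := ∃ f : ℕ → ℝ, EUcond f ∧ I = EU f
private def mB (l : ℕ → ℕ) : ℕ → ℕ
  | 0 => 0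
  | s+1 => mB l s + l s

private lemma mB_sum (l : ℕ → ℕ) (k : ℕ) : mB l k = ∑ s ∈ Finset.range k, l s := by
  induction k with
  | zero => rfl
  | succ k ih => rw [Finset.sum_range_succ, ← ih]; rfl

private lemma mB_strictMono (l : ℕ → ℕ) (hl : ∀ s, 1 ≤ l s) : StrictMono (mB l) := by
  apply strictMono_nat_of_lt_succ
  intro s
  have := hl s
  show mB l s < mB l s + l s
  omega

private lemma key (f : ℕ → ℝ) (hf0 : ∀ n, 0 ≤ f n)
    (hFtop : Tendsto (fun n => ∑ i ∈ Finset.range n, f i) atTop atTop)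
    (hratio : Tendsto (fun n => f n / ∑ i ∈ Finset.range (n + 1), f i) atTop (𝓝 0))
    (c : ℕ → ℕ) (hcmono : Monotone c) (hcle : ∀ n, c n ≤ n)
    (hcunb : ∀ j, ∃ n, j ≤ c n)
    (hcK : ∀ K : ℕ, ∃ N, ∀ n ≥ N, K * c n ≤ n) :
    ∃ B : Set ℕ, B ∈ EU f ∧ ∀ n, c n ≤ cnt B n := by
  classical
  set F : ℕ → ℝ := fun n => ∑ i ∈ Finset.range n, f i with hFdef
  have hFmono : Monotone F := fun a b hab =>
    Finset.sum_le_sum_of_subset_of_nonneg (Finset.range_subset_range.mpr hab) (fun i _ _ => hf0 i)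
  have hFnonneg : ∀ n, 0 ≤ F n := fun n => Finset.sum_nonneg fun i _ => hf0 i
  -- the function g
  set g : ℕ → ℕ := fun j => Nat.find (hcunb j) with hgdef
  have hg : ∀ j, j ≤ c (g j) := fun j => Nat.find_spec (hcunb j)
  have hgle : ∀ j n, j ≤ c n → g j ≤ n := fun j n h => Nat.find_min' (hcunb j) h
  have hgge : ∀ j, j ≤ g j := fun j => le_trans (hg j) (hcle _)
  -- the block lengths L
  set L : ℕ → ℕ := fun j => sInf {t | ∃ j', max j 1 ≤ j' ∧ t = g j' / j'} with hLdef
  have hLne : ∀ j, {t | ∃ j', max j 1 ≤ j' ∧ t = g j' / j'}.Nonempty :=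
    fun j => ⟨g (max j 1) / (max j 1), max j 1, le_refl _, rfl⟩
  have hLmono : Monotone L := by
    intro a b hab
    obtain ⟨j', hj1, hj2⟩ := Nat.sInf_mem (hLne b)
    exact Nat.sInf_le ⟨j', le_trans (max_le_max hab le_rfl) hj1, hj2⟩
  have hLpos : ∀ j, 1 ≤ L j := by
    intro j
    apply le_csInf (hLne j)
    rintro t ⟨j', hj1, rfl⟩
    have hj'pos : 0 < j' := lt_of_lt_of_le (by simp) hj1
    rw [Nat.le_div_iff_mul_le hj'pos, one_mul]
    exact hgge j'
  have hLunb : ∀ K : ℕ, ∃ j0, ∀ j, j0 ≤ j → K ≤ L j := by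
    intro K
    obtain ⟨N, hN⟩ := hcK K
    refine ⟨c N + 1, fun j hj => ?_⟩
    apply le_csInf (hLne j)
    rintro t ⟨j', hj1, rfl⟩
    have hj'pos : 0 < j' := lt_of_lt_of_le (by simp) hj1
    have hjj' : j ≤ j' := le_trans (le_max_left _ _) hj1
    have hgN : N ≤ g j' := by
      by_contra h
      push_neg at h
      have h1 : c (g j') ≤ c N := hcmono (le_of_lt h)
      have h2 : j' ≤ c N := le_trans (hg j') h1
      omega
    rw [Nat.le_div_iff_mul_le hj'pos]
    calc K * j' ≤ K * c (g j') := Nat.mul_le_mul_left K (hg j')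
      _ ≤ g j' := hN (g j') hgN
  -- blocks
  set m : ℕ → ℕ := mB L with hmdef
  have hmmono : StrictMono m := mB_strictMono L hLpos
  have hmge : ∀ s, s ≤ m s := fun s => hmmono.le_apply
  have hmc : ∀ n, m (c n) ≤ n := by
    intro n
    rcases Nat.eq_zero_or_pos (c n) with h0 | hpos
    · rw [h0]; exact Nat.zero_le n
    · have h1 : m (c n) ≤ c n * L (c n) := by
        rw [hmdef, mB_sum]
        calc ∑ s ∈ Finset.range (c n), L s
            ≤ ∑ _s ∈ Finset.range (c n), L (c n) :=
              Finset.sum_le_sum (fun s hs => hLmono (le_of_lt (Finset.mem_range.mp hs)))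
          _ = c n * L (c n) := by rw [Finset.sum_const, Finset.card_range, smul_eq_mul]
      have hL1 : L (c n) ≤ g (c n) / (c n) := Nat.sInf_le ⟨c n, by omega, rfl⟩
      have h2 : c n * L (c n) ≤ g (c n) := by
        calc c n * L (c n) ≤ c n * (g (c n) / c n) := Nat.mul_le_mul_left _ hL1
          _ = (g (c n) / c n) * c n := mul_comm _ _
          _ ≤ g (c n) := Nat.div_mul_le_self _ _
      exact le_trans h1 (le_trans h2 (hgle (c n) n le_rfl))
  -- choice of minimal points
  have hbex : ∀ s, ∃ i ∈ Finset.Ico (m s) (m (s+1)), ∀ j ∈ Finset.Ico (m s) (m (s+1)), f i ≤ f j := by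
    intro s
    apply Finset.exists_min_image
    rw [Finset.nonempty_Ico]
    exact hmmono (Nat.lt_succ_self s)
  choose b hbmem hbmin using hbex
  have hbge : ∀ s, m s ≤ b s := fun s => (Finset.mem_Ico.mp (hbmem s)).1
  have hblt : ∀ s, b s < m (s+1) := fun s => (Finset.mem_Ico.mp (hbmem s)).2
  have hbStrict : StrictMono b :=
    strictMono_nat_of_lt_succ (fun s => lt_of_lt_of_le (hblt s) (hbge (s+1)))
  have hbavg : ∀ s, (L s : ℝ) * f (b s) ≤ F (m (s+1)) - F (m s) := by
    intro s
    have h1 : (Finset.Ico (m s) (m (s+1))).card • f (b s)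
        ≤ ∑ i ∈ Finset.Ico (m s) (m (s+1)), f i :=
      Finset.card_nsmul_le_sum _ _ _ (hbmin s)
    rw [Nat.card_Ico, nsmul_eq_mul,
      Finset.sum_Ico_eq_sub f (le_of_lt (hmmono (Nat.lt_succ_self s)))] at h1
    have hms : m (s+1) - m s = L s := by
      have : m (s+1) = m s + L s := rfl
      omega
    rw [hms] at h1
    exact h1
  refine ⟨Set.range b, ?_, ?_⟩
  · -- EU membership
    rw [EU, Set.mem_setOf_eq, Metric.tendsto_atTop]
    intro ε hε
    set ε4 : ℝ := ε/4 with hε4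
    have hε4pos : 0 < ε4 := by positivity
    set K : ℕ := ⌈1/ε4⌉₊ with hK
    have hKpos : 0 < K := Nat.ceil_pos.mpr (by positivity)
    have hKR : (0:ℝ) < K := by exact_mod_cast hKpos
    have hKinv : 1/(K:ℝ) ≤ ε4 := by
      rw [div_le_iff₀ hKR]
      have h1 : 1/ε4 ≤ (K:ℝ) := Nat.le_ceil _
      calc (1:ℝ) = ε4 * (1/ε4) := by field_simp
        _ ≤ ε4 * K := mul_le_mul_of_nonneg_left h1 (le_of_lt hε4pos)
    obtain ⟨M1, hM1⟩ := eventually_atTop.mp (hratio.eventually (gt_mem_nhds hε4pos))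
    obtain ⟨M2, hM2⟩ := eventually_atTop.mp (hFtop.eventually_ge_atTop 1)
    set M := max M1 M2 with hM
    have hMf : ∀ i, M ≤ i → f i ≤ ε4 * F (i+1) := by
      intro i hi
      have h1 : f i / F (i+1) < ε4 := hM1 i (le_trans (le_max_left _ _) hi)
      have h2 : (1:ℝ) ≤ F (i+1) := hM2 (i+1) (by
        have : M2 ≤ i := le_trans (le_max_right _ _) hi
        omega)
      have h3 : (0:ℝ) < F (i+1) := lt_of_lt_of_le zero_lt_one h2
      calc f i = (f i / F (i+1)) * F (i+1) := by field_simp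
        _ ≤ ε4 * F (i+1) := mul_le_mul_of_nonneg_right (le_of_lt h1) (le_of_lt h3)
    obtain ⟨j0, hj0⟩ := hLunb K
    set s1 := max j0 M with hs1
    have hLs1 : K ≤ L s1 := hj0 s1 (le_max_left _ _)
    have hms1M : M ≤ m s1 := le_trans (le_max_right _ _) (hmge s1)
    obtain ⟨n3, hn3⟩ := eventually_atTop.mp (hFtop.eventually_ge_atTop (F (m (s1+1)) / ε4))
    refine ⟨max (max M2 n3) (m (s1+1)), fun n hn => ?_⟩
    have hnM2 : M2 ≤ n := le_trans (le_trans (le_max_left _ _) (le_max_left _ _)) hn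
    have hnn3 : n3 ≤ n := le_trans (le_trans (le_max_right _ _) (le_max_left _ _)) hn
    have hnms1 : m (s1+1) ≤ n := le_trans (le_max_right _ _) hn
    have hFn1 : (1:ℝ) ≤ F n := hM2 n hnM2
    have hFnpos : (0:ℝ) < F n := lt_of_lt_of_le zero_lt_one hFn1
    have hFms1 : F (m (s1+1)) ≤ ε4 * F n := by
      have h1 := hn3 n hnn3
      rw [div_le_iff₀ hε4pos] at h1
      linarith
    -- the index S of the current partial block
    have hSex : ∃ s, n < m (s+1) := ⟨n, lt_of_lt_of_le (Nat.lt_succ_self n) (hmge (n+1))⟩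
    set S : ℕ := Nat.find hSex with hS
    have hSspec : n < m (S+1) := Nat.find_spec hSex
    have hSmin : ∀ s, s < S → m (s+1) ≤ n := fun s hs => le_of_not_gt (Nat.find_min hSex hs)
    have hs1S : s1 < S := by
      by_contra h
      push_neg at h
      have h1 : m (S+1) ≤ m (s1+1) := hmmono.monotone (by omega)
      omega
    have hmSn : m S ≤ n := by
      rcases Nat.eq_zero_or_pos S with h0 | hpos
      · rw [h0]; exact Nat.zero_le n
      · have h1 := hSmin (S-1) (by omega)
        have h2 : S - 1 + 1 = S := by omega
        rwa [h2] at h1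
    -- sum manipulations
    have hsum1 : (∑ i ∈ Finset.range n, Set.indicator (Set.range b) f i)
        = ∑ i ∈ (Finset.range n).filter (fun i => i ∈ Set.range b), f i := by
      rw [Finset.sum_filter]
      apply Finset.sum_congr rfl
      intro i _
      by_cases h : i ∈ Set.range b
      · simp [h]
      · simp [h]
    set I : Finset ℕ := (Finset.range n).filter (fun s => b s < n) with hI
    have hsum2 : ∑ i ∈ (Finset.range n).filter (fun i => i ∈ Set.range b), f i
        ≤ ∑ s ∈ I, f (b s) := by
      rw [← Finset.sum_image (fun x _ y _ h => hbStrict.injective h)]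
      apply Finset.sum_le_sum_of_subset_of_nonneg ?_ (fun i _ _ => hf0 i)
      intro i hi
      rw [Finset.mem_filter, Finset.mem_range] at hi
      obtain ⟨hin, s, hs⟩ := hi
      rw [Finset.mem_image]
      refine ⟨s, ?_, hs⟩
      rw [hI, Finset.mem_filter, Finset.mem_range]
      have hsbs : s ≤ b s := le_trans (hmge s) (hbge s)
      constructor
      · omega
      · omega
    have hsplit : ∑ s ∈ I, f (b s)
        = (∑ s ∈ I.filter (fun s => s < s1), f (b s))
          + ((∑ s ∈ (I.filter (fun s => ¬ s < s1)).filter (fun s => m (s+1) ≤ n), f (b s))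
            + ∑ s ∈ (I.filter (fun s => ¬ s < s1)).filter (fun s => ¬ m (s+1) ≤ n), f (b s)) := by
      rw [Finset.sum_filter_add_sum_filter_not (I.filter (fun s => ¬ s < s1))
        (fun s => m (s+1) ≤ n), Finset.sum_filter_add_sum_filter_not I (fun s => s < s1)]
    have hT1 : ∑ s ∈ I.filter (fun s => s < s1), f (b s) ≤ F (m s1) := by
      rw [← Finset.sum_image (fun x _ y _ h => hbStrict.injective h)]
      apply Finset.sum_le_sum_of_subset_of_nonneg ?_ (fun i _ _ => hf0 i)
      intro i hi
      rw [Finset.mem_image] at hi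
      obtain ⟨s, hs, rfl⟩ := hi
      rw [Finset.mem_filter] at hs
      rw [Finset.mem_range]
      exact lt_of_lt_of_le (hblt s) (hmmono.monotone hs.2)
    have hT2 : ∑ s ∈ (I.filter (fun s => ¬ s < s1)).filter (fun s => m (s+1) ≤ n), f (b s)
        ≤ ε4 * F n := by
      set J := (I.filter (fun s => ¬ s < s1)).filter (fun s => m (s+1) ≤ n) with hJ
      have hKsum : (K:ℝ) * ∑ s ∈ J, f (b s) ≤ ∑ s ∈ J, (F (m (s+1)) - F (m s)) := by
        rw [Finset.mul_sum]
        apply Finset.sum_le_sum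
        intro s hs
        rw [hJ, Finset.mem_filter, Finset.mem_filter] at hs
        have hs1s : s1 ≤ s := le_of_not_gt hs.1.2
        have h1 : (K:ℝ) ≤ (L s : ℝ) := by exact_mod_cast le_trans hLs1 (hLmono hs1s)
        calc (K:ℝ) * f (b s) ≤ (L s : ℝ) * f (b s) :=
              mul_le_mul_of_nonneg_right h1 (hf0 _)
          _ ≤ F (m (s+1)) - F (m s) := hbavg s
      have hsub2 : J ⊆ Finset.Ico s1 S := by
        intro s hs
        rw [hJ, Finset.mem_filter, Finset.mem_filter] at hs
        rw [Finset.mem_Ico]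
        refine ⟨le_of_not_gt hs.1.2, ?_⟩
        by_contra h
        push_neg at h
        have h1 : m (S+1) ≤ m (s+1) := hmmono.monotone (by omega)
        have h2 := hs.2
        omega
      have htel : ∑ s ∈ Finset.Ico s1 S, (F (m (s+1)) - F (m s)) = F (m S) - F (m s1) := by
        rw [Finset.sum_Ico_eq_sub _ (le_of_lt hs1S), Finset.sum_range_sub (fun s => F (m s)),
          Finset.sum_range_sub (fun s => F (m s))]
        ring
      have h2 : ∑ s ∈ J, (F (m (s+1)) - F (m s)) ≤ F (m S) - F (m s1) := by
        rw [← htel]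
        apply Finset.sum_le_sum_of_subset_of_nonneg hsub2
        intro i _ _
        have h3 := hFmono (le_of_lt (hmmono (Nat.lt_succ_self i)))
        linarith
      have h3 : F (m S) - F (m s1) ≤ F n := by
        have h4 := hFmono hmSn
        have h5 := hFnonneg (m s1)
        linarith
      have h4 : ∑ s ∈ J, f (b s) ≤ F n / K := by
        rw [le_div_iff₀ hKR, mul_comm]
        linarith
      calc ∑ s ∈ J, f (b s) ≤ F n / K := h4
        _ = F n * (1/K) := by ring
        _ ≤ F n * ε4 := mul_le_mul_of_nonneg_left hKinv (hFnonneg n)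
        _ = ε4 * F n := mul_comm _ _
    have hT3 : ∑ s ∈ (I.filter (fun s => ¬ s < s1)).filter (fun s => ¬ m (s+1) ≤ n), f (b s)
        ≤ ε4 * F n := by
      set J3 := (I.filter (fun s => ¬ s < s1)).filter (fun s => ¬ m (s+1) ≤ n) with hJ3
      have hsub3 : J3 ⊆ {S} := by
        intro s hs
        rw [hJ3, Finset.mem_filter, Finset.mem_filter, hI, Finset.mem_filter] at hs
        obtain ⟨⟨⟨hsn, hbsn⟩, hs1s⟩, hms⟩ := hs
        rw [Finset.mem_singleton]
        have h1 : S ≤ s := by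
          by_contra h
          push_neg at h
          exact hms (hSmin s h)
        have h2 : s ≤ S := by
          by_contra h
          push_neg at h
          have hx : m (S+1) ≤ m s := hmmono.monotone h
          have hy : m s ≤ b s := hbge s
          omega
        omega
      by_cases hc3 : J3.Nonempty
      · obtain ⟨s0, hsJ⟩ := hc3
        have hsS : s0 = S := Finset.mem_singleton.mp (hsub3 hsJ)
        rw [hsS] at hsJ
        have hbSn : b S < n := by
          rw [hJ3, Finset.mem_filter, Finset.mem_filter, hI, Finset.mem_filter] at hsJ
          exact hsJ.1.1.2
        have h1 : ∑ x ∈ J3, f (b x) ≤ ∑ x ∈ ({S} : Finset ℕ), f (b x) :=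
          Finset.sum_le_sum_of_subset_of_nonneg hsub3 (fun i _ _ => hf0 _)
        rw [Finset.sum_singleton] at h1
        have h2 : f (b S) ≤ ε4 * F (b S + 1) := by
          apply hMf
          calc M ≤ m s1 := hms1M
            _ ≤ m S := hmmono.monotone (le_of_lt hs1S)
            _ ≤ b S := hbge S
        have h3 : F (b S + 1) ≤ F n := hFmono (by omega)
        calc ∑ x ∈ J3, f (b x) ≤ f (b S) := h1
          _ ≤ ε4 * F (b S + 1) := h2
          _ ≤ ε4 * F n := mul_le_mul_of_nonneg_left h3 (le_of_lt hε4pos)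
      · rw [Finset.not_nonempty_iff_eq_empty] at hc3
        rw [hc3, Finset.sum_empty]
        exact mul_nonneg (le_of_lt hε4pos) (hFnonneg n)
    have hFs1 : F (m s1) ≤ ε4 * F n :=
      le_trans (hFmono (le_of_lt (hmmono (Nat.lt_succ_self s1)))) hFms1
    have htotal : (∑ i ∈ Finset.range n, Set.indicator (Set.range b) f i) ≤ 3 * ε4 * F n := by
      calc (∑ i ∈ Finset.range n, Set.indicator (Set.range b) f i)
          ≤ ∑ s ∈ I, f (b s) := by rw [hsum1]; exact hsum2
        _ = _ := hsplit
        _ ≤ ε4 * F n + (ε4 * F n + ε4 * F n) :=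
            add_le_add (le_trans hT1 hFs1) (add_le_add hT2 hT3)
        _ = 3 * ε4 * F n := by ring
    have hnum : (0:ℝ) ≤ ∑ i ∈ Finset.range n, Set.indicator (Set.range b) f i :=
      Finset.sum_nonneg (fun i _ => Set.indicator_nonneg (fun j _ => hf0 j) i)
    rw [Real.dist_eq, sub_zero, abs_of_nonneg (div_nonneg hnum (hFnonneg n)), div_lt_iff₀ hFnpos]
    calc (∑ i ∈ Finset.range n, Set.indicator (Set.range b) f i) ≤ 3 * ε4 * F n := htotal
      _ < ε * F n := by
        rw [hε4]
        nlinarith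
  · -- counting
    intro n
    have hcard : (Finset.image b (Finset.range (c n))).card = c n := by
      rw [Finset.card_image_of_injective _ hbStrict.injective, Finset.card_range]
    have himg : ↑(Finset.image b (Finset.range (c n))) ⊆ Set.range b ∩ Set.Iio n := by
      intro i hi
      simp only [Finset.coe_image, Finset.coe_range, Set.mem_image, Set.mem_Iio] at hi
      obtain ⟨s, hs, rfl⟩ := hi
      refine ⟨⟨s, rfl⟩, ?_⟩
      have h1 : b s < m (s+1) := hblt s
      have h2 : m (s+1) ≤ m (c n) := hmmono.monotone (by omega)
      have h3 := hmc n
      exact Set.mem_Iio.mpr (by omega)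
    calc c n = ((Finset.image b (Finset.range (c n)) : Finset ℕ) : Set ℕ).ncard := by
          rw [Set.ncard_coe_finset, hcard]
      _ ≤ cnt (Set.range b) n :=
          Set.ncard_le_ncard himg ((Set.finite_Iio n).inter_of_right _)

/-- every increasing-invariant Erdős–Ulam ideal contains `Z`. -/
theorem stmt_13 (f : ℕ → ℝ) (hf : EUcond f) (hinv : IncInv (EU f)) :
    Zid ⊆ EU f := by
  obtain ⟨hf0, hFtop, hratio⟩ := hf
  intro A hA
  rw [Zid, Set.mem_setOf_eq] at hA
  set c : ℕ → ℕ := fun n => max (cnt A n) (Nat.sqrt n) with hc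
  have hcntmono : ∀ {n n' : ℕ}, n ≤ n' → cnt A n ≤ cnt A n' := by
    intro n n' h
    exact Set.ncard_le_ncard (Set.inter_subset_inter_right A (Set.Iio_subset_Iio h))
      ((Set.finite_Iio n').inter_of_right A)
  have hcntle : ∀ n, cnt A n ≤ n := by
    intro n
    have h1 : cnt A n ≤ (Set.Iio n).ncard :=
      Set.ncard_le_ncard Set.inter_subset_right (Set.finite_Iio n)
    rwa [← Finset.coe_range, Set.ncard_coe_finset, Finset.card_range] at h1
  have hcmono : Monotone c := fun a b hab => max_le_max (hcntmono hab) (Nat.sqrt_le_sqrt hab)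
  have hcle : ∀ n, c n ≤ n := fun n => max_le (hcntle n) (Nat.sqrt_le_self n)
  have hcunb : ∀ j, ∃ n, j ≤ c n := fun j =>
    ⟨j*j, le_max_of_le_right (le_of_eq (Nat.sqrt_eq j).symm)⟩
  have hsqrt_tendsto : Tendsto (fun n : ℕ => Nat.sqrt n) atTop atTop := by
    apply tendsto_atTop_atTop.mpr
    intro bnd
    refine ⟨bnd*bnd, fun a ha => ?_⟩
    have h1 := Nat.sqrt_le_sqrt ha
    rwa [Nat.sqrt_eq] at h1
  have hsq : Tendsto (fun n : ℕ => (Nat.sqrt n : ℝ) / n) atTop (𝓝 0) := by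
    apply squeeze_zero' (g := fun n : ℕ => 1 / (Nat.sqrt n : ℝ))
    · filter_upwards with n
      positivity
    · filter_upwards [eventually_ge_atTop 1] with n hn
      have h1 : 0 < Nat.sqrt n := Nat.sqrt_pos.mpr hn
      have h1R : (0:ℝ) < (Nat.sqrt n : ℝ) := by exact_mod_cast h1
      have hnR : (0:ℝ) < (n:ℝ) := by exact_mod_cast hn
      rw [div_le_div_iff₀ hnR h1R, one_mul]
      have h2 : Nat.sqrt n ^ 2 ≤ n := Nat.sqrt_le' n
      have h2' : Nat.sqrt n * Nat.sqrt n ≤ n := by nlinarith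
      exact_mod_cast h2'
    · exact tendsto_one_div_atTop_nhds_zero_nat.comp hsqrt_tendsto
  have hden : Tendsto (fun n : ℕ => (c n : ℝ) / n) atTop (𝓝 0) := by
    apply squeeze_zero' (g := fun n : ℕ => (cnt A n : ℝ)/n + (Nat.sqrt n : ℝ)/n)
    · filter_upwards with n
      positivity
    · filter_upwards [eventually_gt_atTop 0] with n hn
      have hnR : (0:ℝ) < (n:ℝ) := by exact_mod_cast hn
      have h1 : (c n : ℝ) ≤ (cnt A n : ℝ) + (Nat.sqrt n : ℝ) := by
        have h0 : c n ≤ cnt A n + Nat.sqrt n :=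
          max_le (Nat.le_add_right _ _) (Nat.le_add_left _ _)
        exact_mod_cast h0
      rw [← add_div]
      gcongr
    · have := hA.add hsq
      simpa using this
  have hcK : ∀ K : ℕ, ∃ N, ∀ n ≥ N, K * c n ≤ n := by
    intro K
    rcases Nat.eq_zero_or_pos K with h0 | hKpos
    · exact ⟨0, fun n _ => by simp [h0]⟩
    have hKR : (0:ℝ) < (K:ℝ) := by exact_mod_cast hKpos
    have h1 : (0:ℝ) < 1/(K:ℝ) := by positivity
    obtain ⟨N, hN⟩ := eventually_atTop.mp
      ((hden.eventually (gt_mem_nhds h1)).and (eventually_gt_atTop 0))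
    refine ⟨N, fun n hn => ?_⟩
    obtain ⟨h2, h3⟩ := hN n hn
    have hnR : (0:ℝ) < (n:ℝ) := by exact_mod_cast h3
    rw [div_lt_div_iff₀ hnR hKR] at h2
    have h4 : (K:ℝ) * (c n) ≤ (n:ℝ) := by nlinarith
    exact_mod_cast h4
  obtain ⟨B, hB, hBc⟩ := key f hf0 hFtop hratio c hcmono hcle hcunb hcK
  exact hinv B hB A (fun n => le_trans (le_max_left _ _) (hBc n))
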